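/- If C′ and D are classes of objects in a triangulated category (with small coproducts) such that C′ ⊥ D (i.e. Hom(X, Y) = 0 for all X ∈ C′, Y ∈ D), then the big extension-closure C of C′ also satisfies C ⊥ D. -/

import Mathlib

open CategoryTheory CategoryTheory.Limits CategoryTheory.Pretriangulated ZeroObject

universe v u

variable {C : Type u} [Category.{v} C] [Preadditive C] [HasZeroObject C]
  [HasShift C ℤ] [∀ n : ℤ, (shiftFunctor C n).Additive] [Pretriangulated C]

/-- The map `⊕ 1 − ⊕ φᵢ : ∐ Yᵢ ⟶ ∐ Yᵢ` whose cone is the homotopy colimit. -/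
noncomputable def hocolimMap (Y : ℕ → C) (φ : ∀ i, Y i ⟶ Y (i + 1)) [HasCoproduct Y] :
    (∐ Y) ⟶ ∐ Y :=
  Sigma.desc fun i => Sigma.ι Y i - φ i ≫ Sigma.ι Y (i + 1)

/-- `H` is a homotopy colimit of the sequence `(Y, φ)` if it is a cone of `hocolimMap Y φ`. -/
def IsHocolim (Y : ℕ → C) (φ : ∀ i, Y i ⟶ Y (i + 1)) [HasCoproduct Y] (H : C) : Prop :=
  ∃ (ι' : (∐ Y) ⟶ H) (π : H ⟶ (∐ Y)⟦(1 : ℤ)⟧),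
    Triangle.mk (hocolimMap Y φ) ι' π ∈ distTriang C

/-- `Z` is a cone of the morphism `f`. -/
def IsConeOf {A B : C} (f : A ⟶ B) (Z : C) : Prop :=
  ∃ (g : B ⟶ Z) (h : Z ⟶ A⟦(1 : ℤ)⟧), Triangle.mk f g h ∈ distTriang C

/-- A class of objects is strongly extension-closed if it contains `0` and contains all
homotopy colimits of sequences whose first term and all cones of connecting maps lie
in the class. -/
def IsStronglyExtClosed [HasCountableCoproducts C] (P : Set C) : Prop :=
  (0 : C) ∈ P ∧
    ∀ (Y : ℕ → C) (φ : ∀ i, Y i ⟶ Y (i + 1)) (H : C), IsHocolim Y φ H →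
      Y 0 ∈ P → (∀ i, ∃ Z, IsConeOf (φ i) Z ∧ Z ∈ P) → H ∈ P

/-- `X` is a retract of `Y`. -/
def IsRetractOf (X Y : C) : Prop :=
  ∃ (i : X ⟶ Y) (r : Y ⟶ X), i ≫ r = 𝟙 X

/-- A class of objects is closed under retracts. -/
def IsRetractClosed (P : Set C) : Prop :=
  ∀ X Y : C, IsRetractOf X Y → Y ∈ P → X ∈ P

/-- A class of objects is closed under arbitrary small coproducts. -/
def IsCoprodClosed [HasCoproducts.{v} C] (P : Set C) : Prop :=
  ∀ (ι : Type v) (Z : ι → C), (∀ i, Z i ∈ P) → (∐ Z) ∈ P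

/-- The big extension-closure of a class `C'`: the smallest strongly extension-closed,
retract-closed class containing `C'` and closed under arbitrary small coproducts. -/
def bigExtClosure [HasCoproducts.{v} C] (C' : Set C) : Set C :=
  ⋂₀ {P : Set C | C' ⊆ P ∧ IsStronglyExtClosed P ∧ IsRetractClosed P ∧ IsCoprodClosed P}

theorem stmt5 [HasCoproducts.{v} C] (C' D : Set C)
    (h : ∀ X ∈ C', ∀ Y ∈ D, ∀ f : X ⟶ Y, f = 0) :
    ∀ X ∈ bigExtClosure C', ∀ Y ∈ D, ∀ f : X ⟶ Y, f = 0 := by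
  set P : Set C := {X : C | ∀ Y ∈ D, ∀ f : X ⟶ Y, f = 0} with hP
  have key : ∀ X ∈ bigExtClosure C', X ∈ P := by
    intro X hX
    apply hX
    refine ⟨fun x hx => h x hx, ⟨?_, ?_⟩, ?_, ?_⟩
    · -- zero object
      intro T hT g
      exact (isZero_zero C).eq_of_src g 0
    · -- hocolim case
      rintro Y φ H ⟨ι', π, hTri⟩ hY0P hcones T hT f
      choose Z hZ hZP using hcones
      choose gZ hZ3 hZdist using hZ
      -- Step A : all Y i are orthogonal to T
      have hYiP : ∀ i (p : Y i ⟶ T), p = 0 := by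
        intro i
        induction i with
        | zero => exact fun p => hY0P T hT p
        | succ n ih =>
          intro p
          obtain ⟨q, hq⟩ := Triangle.yoneda_exact₂ _ (hZdist n) p (ih (φ n ≫ p))
          rw [hq, hZP n T hT q]
          exact comp_zero
      -- Step B : surjectivity of (φ i)⟦1⟧ ≫ -
      have surj : ∀ i (t : (Y i)⟦(1:ℤ)⟧ ⟶ T),
          ∃ s : (Y (i+1))⟦(1:ℤ)⟧ ⟶ T, (φ i)⟦(1:ℤ)⟧' ≫ s = t := by
        intro i t
        obtain ⟨s, hs⟩ := Triangle.yoneda_exact₂ _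
          (rot_of_distTriang _ (rot_of_distTriang _ (hZdist i)))
          t (hZP i T hT _)
        refine ⟨-s, ?_⟩
        rw [hs]
        exact (Preadditive.comp_neg _ _).trans (Preadditive.neg_comp _ _).symm
      -- Step C : ι' ≫ f = 0
      have hcf : ι' ≫ f = 0 := by
        apply colimit.hom_ext
        rintro ⟨i⟩
        simpa using hYiP i (Sigma.ι Y i ≫ ι' ≫ f)
      -- Step D : factor f through π
      obtain ⟨g, hg⟩ := Triangle.yoneda_exact₃ _ hTri f hcf
      -- Step E : g factors through (hocolimMap Y φ)⟦1⟧
      let adj := (shiftEquiv C (1:ℤ)).toAdjunction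
      -- recursive choice of components
      let c : ∀ i, (Y i)⟦(1:ℤ)⟧ ⟶ T := fun i =>
        Nat.rec 0 (fun n cn => (surj n (cn - (Sigma.ι Y n)⟦(1:ℤ)⟧' ≫ g)).choose) i
      have hcspec : ∀ i, (φ i)⟦(1:ℤ)⟧' ≫ c (i+1) = c i - (Sigma.ι Y i)⟦(1:ℤ)⟧' ≫ g :=
        fun i => (surj i _).choose_spec
      have hEadd : ∀ (W : C) (a b : W⟦(1:ℤ)⟧ ⟶ T),
          (adj.homEquiv W T) (a - b) = (adj.homEquiv W T) a - (adj.homEquiv W T) b := by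
        intro W a b
        haveI : (shiftEquiv C (1:ℤ)).inverse.Additive := (inferInstance : (shiftFunctor C (-1 : ℤ)).Additive)
        erw [Adjunction.homEquiv_unit, Adjunction.homEquiv_unit, Adjunction.homEquiv_unit, Functor.map_sub,
          Preadditive.comp_sub]
      let g' : (∐ Y)⟦(1:ℤ)⟧ ⟶ T :=
        (adj.homEquiv _ _).symm (Sigma.desc fun i => adj.homEquiv _ _ (c i))
      have hg' : (hocolimMap Y φ)⟦(1:ℤ)⟧' ≫ g' = g := by
        have hnat : ∀ (W W' : C) (k : W ⟶ W') (x : W'⟦(1:ℤ)⟧ ⟶ T),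
            (adj.homEquiv W T) (k⟦(1:ℤ)⟧' ≫ x) = k ≫ (adj.homEquiv W' T) x :=
          fun W W' k x => adj.homEquiv_naturality_left k x
        apply (adj.homEquiv _ _).injective
        erw [hnat]
        have hEg' : (adj.homEquiv _ _) g' = Sigma.desc fun i => adj.homEquiv _ _ (c i) :=
          (adj.homEquiv _ _).apply_symm_apply _
        rw [hEg']
        apply colimit.hom_ext
        rintro ⟨i⟩
        have h1 : Sigma.ι Y i ≫ hocolimMap Y φ = Sigma.ι Y i - φ i ≫ Sigma.ι Y (i+1) := by
          simp [hocolimMap]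
        show Sigma.ι Y i ≫ hocolimMap Y φ ≫ _ = Sigma.ι Y i ≫ _
        rw [← Category.assoc, h1]
        have h2 : ∀ j, Sigma.ι Y j ≫ (Sigma.desc fun k => adj.homEquiv _ _ (c k)) =
            adj.homEquiv _ _ (c j) := by intro j; simp
        rw [Preadditive.sub_comp, Category.assoc, h2, h2, ← hnat]
        erw [← hnat, hcspec i,
          hEadd, sub_sub_cancel]
        rfl
      have hz := comp_distTriang_mor_zero₃₁ _ hTri
      rw [hg, ← hg']
      exact (Category.assoc _ _ _).symm.trans ((congrArg (· ≫ g') hz).trans zero_comp)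
    · -- retract closed
      rintro X' Y' ⟨i, r, hir⟩ hY' T hT f
      have : r ≫ f = 0 := hY' T hT (r ≫ f)
      calc f = i ≫ r ≫ f := by rw [← Category.assoc, hir, Category.id_comp]
        _ = 0 := by rw [this, comp_zero]
    · -- coproduct closed
      intro ι Z hZ T hT f
      apply colimit.hom_ext
      rintro ⟨i⟩
      simpa using hZ i T hT (Sigma.ι Z i ≫ f)
  intro X hX T hT f
  exact key X hX T hT f
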